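/- For any non-negative integers p and m, ζ*_p({2}^m,1) = Σ_{k=0}^m (-1)^k · ζ_p(1,{2}^k) · ζ*_p({2}^{m-k}). -/

import Mathlib

open scoped BigOperators

/-- Truncated multiple zeta value: sum over strictly decreasing tuples bounded by p. -/
noncomputable def zetaT (p : ℕ) (ks : List ℕ) : ℝ :=
  ∑ f ∈ (Fintype.piFinset fun _ : Fin ks.length => Finset.Icc 1 p) |>.filter
      (fun f => ∀ i j : Fin ks.length, i < j → f j < f i),
    ∏ i, ((f i : ℝ) ^ ks.get i)⁻¹

/-- Truncated multiple zeta-star value: sum over weakly decreasing tuples bounded by p. -/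
noncomputable def zetaStarT (p : ℕ) (ks : List ℕ) : ℝ :=
  ∑ f ∈ (Fintype.piFinset fun _ : Fin ks.length => Finset.Icc 1 p) |>.filter
      (fun f => ∀ i j : Fin ks.length, i ≤ j → f j ≤ f i),
    ∏ i, ((f i : ℝ) ^ ks.get i)⁻¹

lemma zetaT_nil (p : ℕ) : zetaT p [] = 1 := by
  simp [zetaT]

lemma zetaT_cons (p k : ℕ) (ks : List ℕ) :
    zetaT p (k :: ks) = ∑ n ∈ Finset.Icc 1 p, ((n:ℝ)^k)⁻¹ * zetaT (n-1) ks := by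
  rw [zetaT]
  simp only [List.length_cons]
  conv_rhs => enter [2, n]; rw [zetaT, Finset.mul_sum]
  rw [Finset.sum_sigma']
  refine Finset.sum_nbij' (i := fun f => (⟨f 0, fun i => f i.succ⟩ : (n : ℕ) × (Fin ks.length → ℕ)))
    (j := fun x => Fin.cons x.1 x.2) ?_ ?_ ?_ ?_ ?_
  · intro f hf
    simp only [Finset.mem_filter, Fintype.mem_piFinset] at hf
    obtain ⟨h1, h2⟩ := hf
    simp only [Finset.mem_sigma, Finset.mem_filter, Fintype.mem_piFinset, Finset.mem_Icc]
    refine ⟨Finset.mem_Icc.mp (h1 0), fun i => ?_, fun i j hij => ?_⟩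
    · have := h2 0 i.succ (Fin.succ_pos i)
      have h1i := Finset.mem_Icc.mp (h1 i.succ)
      exact ⟨h1i.1, Nat.le_sub_one_of_lt this⟩
    · exact h2 i.succ j.succ (Fin.succ_lt_succ_iff.mpr hij)
  · intro x hx
    simp only [Finset.mem_sigma, Finset.mem_filter, Fintype.mem_piFinset, Finset.mem_Icc] at hx
    obtain ⟨hn, hg, hgd⟩ := hx
    simp only [Finset.mem_filter, Fintype.mem_piFinset, Finset.mem_Icc]
    constructor
    · intro i
      refine Fin.cases ?_ ?_ i
      · simpa using hn
      · intro i'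
        simp only [Fin.cons_succ]
        exact ⟨(hg i').1, le_trans (hg i').2 (le_trans (Nat.sub_le _ _) hn.2)⟩
    · intro i j hij
      induction j using Fin.cases with
      | zero => exact absurd hij (by simp [Fin.lt_def])
      | succ j' =>
        induction i using Fin.cases with
        | zero =>
          simp only [Fin.cons_succ, Fin.cons_zero]
          have := (hg j').2
          omega
        | succ i' =>
          simp only [Fin.cons_succ]
          exact hgd i' j' (Fin.succ_lt_succ_iff.mp hij)
  · intro f hf
    exact Fin.cons_self_tail f
  · intro x hx
    simp [Fin.cons_zero, Fin.cons_succ]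
  · intro f hf
    rw [Fin.prod_univ_succ]
    simp [List.get_cons_succ]

lemma zetaStarT_nil (p : ℕ) : zetaStarT p [] = 1 := by
  simp [zetaStarT]

lemma zetaStarT_cons (p k : ℕ) (ks : List ℕ) :
    zetaStarT p (k :: ks) = ∑ n ∈ Finset.Icc 1 p, ((n:ℝ)^k)⁻¹ * zetaStarT n ks := by
  rw [zetaStarT]
  simp only [List.length_cons]
  conv_rhs => enter [2, n]; rw [zetaStarT, Finset.mul_sum]
  rw [Finset.sum_sigma']
  refine Finset.sum_nbij' (i := fun f => (⟨f 0, fun i => f i.succ⟩ : (n : ℕ) × (Fin ks.length → ℕ)))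
    (j := fun x => Fin.cons x.1 x.2) ?_ ?_ ?_ ?_ ?_
  · intro f hf
    simp only [Finset.mem_filter, Fintype.mem_piFinset] at hf
    obtain ⟨h1, h2⟩ := hf
    simp only [Finset.mem_sigma, Finset.mem_filter, Fintype.mem_piFinset, Finset.mem_Icc]
    refine ⟨Finset.mem_Icc.mp (h1 0), fun i => ?_, fun i j hij => ?_⟩
    · have := h2 0 i.succ (Fin.zero_le _)
      have h1i := Finset.mem_Icc.mp (h1 i.succ)
      exact ⟨h1i.1, this⟩
    · exact h2 i.succ j.succ (Fin.succ_le_succ_iff.mpr hij)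
  · intro x hx
    simp only [Finset.mem_sigma, Finset.mem_filter, Fintype.mem_piFinset, Finset.mem_Icc] at hx
    obtain ⟨hn, hg, hgd⟩ := hx
    simp only [Finset.mem_filter, Fintype.mem_piFinset, Finset.mem_Icc]
    constructor
    · intro i
      refine Fin.cases ?_ ?_ i
      · simpa using hn
      · intro i'
        simp only [Fin.cons_succ]
        exact ⟨(hg i').1, le_trans (hg i').2 hn.2⟩
    · intro i j hij
      induction i using Fin.cases with
      | zero =>
        induction j using Fin.cases with
        | zero => simp
        | succ j' =>
          simp only [Fin.cons_succ, Fin.cons_zero]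
          exact (hg j').2
      | succ i' =>
        induction j using Fin.cases with
        | zero => exact absurd hij (by simp [Fin.le_def])
        | succ j' =>
          simp only [Fin.cons_succ]
          exact hgd i' j' (Fin.succ_le_succ_iff.mp hij)
  · intro f hf
    exact Fin.cons_self_tail f
  · intro x hx
    simp [Fin.cons_zero, Fin.cons_succ]
  · intro f hf
    rw [Fin.prod_univ_succ]
    simp [List.get_cons_succ]

noncomputable def C2 : ℕ → ℕ → ℝ
  | _, 0 => 1
  | p, m+1 => ∑ n ∈ Finset.Icc 1 p, (((n:ℝ))^2)⁻¹ * C2 (n-1) m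
termination_by p m => m

noncomputable def D2 : ℕ → ℕ → ℝ
  | _, 0 => 1
  | p, m+1 => ∑ n ∈ Finset.Icc 1 p, (((n:ℝ))^2)⁻¹ * D2 n m
termination_by p m => m

noncomputable def A2 : ℕ → ℕ → ℝ
  | p, 0 => ∑ n ∈ Finset.Icc 1 p, ((n:ℝ))⁻¹
  | p, m+1 => ∑ n ∈ Finset.Icc 1 p, (((n:ℝ))^2)⁻¹ * A2 n m
termination_by p m => m

noncomputable def B2 (p k : ℕ) : ℝ := ∑ n ∈ Finset.Icc 1 p, ((n:ℝ))⁻¹ * C2 (n-1) k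

lemma C2_zero (p : ℕ) : C2 p 0 = 1 := by rw [C2]
lemma D2_zero (p : ℕ) : D2 p 0 = 1 := by rw [D2]

lemma C2_succ (p m : ℕ) :
    C2 (p+1) (m+1) = C2 p (m+1) + (((p+1:ℕ):ℝ)^2)⁻¹ * C2 p m := by
  rw [C2, Finset.sum_Icc_succ_top (by omega), ← C2]
  simp

lemma D2_succ (p m : ℕ) :
    D2 (p+1) (m+1) = D2 p (m+1) + (((p+1:ℕ):ℝ)^2)⁻¹ * D2 (p+1) m := by
  rw [D2, Finset.sum_Icc_succ_top (by omega), ← D2]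

lemma A2_zero_succ (p : ℕ) : A2 (p+1) 0 = A2 p 0 + ((p+1:ℕ):ℝ)⁻¹ := by
  rw [A2, Finset.sum_Icc_succ_top (by omega), ← A2]

lemma A2_succ (p m : ℕ) :
    A2 (p+1) (m+1) = A2 p (m+1) + (((p+1:ℕ):ℝ)^2)⁻¹ * A2 (p+1) m := by
  rw [A2, Finset.sum_Icc_succ_top (by omega), ← A2]

lemma B2_succ (p k : ℕ) :
    B2 (p+1) k = B2 p k + ((p+1:ℕ):ℝ)⁻¹ * C2 p k := by
  rw [B2, Finset.sum_Icc_succ_top (by omega), ← B2]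
  simp

lemma C2_zero_p (m : ℕ) : C2 0 (m+1) = 0 := by rw [C2]; simp
lemma D2_zero_p (m : ℕ) : D2 0 (m+1) = 0 := by rw [D2]; simp
lemma A2_zero_p (m : ℕ) : A2 0 m = 0 := by cases m <;> (rw [A2]; simp)
lemma B2_zero_p (k : ℕ) : B2 0 k = 0 := by rw [B2]; simp

noncomputable def E2 (P Q m : ℕ) : ℝ :=
  ∑ j ∈ Finset.range (m+1), (-1:ℝ)^j * D2 P (m-j) * C2 Q j

noncomputable def F2 (P Q m : ℕ) : ℝ :=
  A2 P m - ∑ k ∈ Finset.range (m+1), (-1:ℝ)^k * B2 Q k * D2 P (m-k)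

lemma B2_eq_A2_zero (p : ℕ) : B2 p 0 = A2 p 0 := by
  rw [B2, A2]
  exact Finset.sum_congr rfl fun n _ => by rw [C2_zero, mul_one]

lemma master : ∀ p : ℕ, (∀ m, 1 ≤ m → E2 p p m = 0) ∧ (∀ m, F2 p p m = 0) := by
  intro p
  induction p with
  | zero =>
    constructor
    · intro m hm
      rw [E2]
      apply Finset.sum_eq_zero
      intro j hj
      rcases Nat.eq_zero_or_pos j with h | h
      · subst h
        obtain ⟨m', rfl⟩ := Nat.exists_eq_add_of_le hm
        simp [show 1+m' = m'+1 from by omega, D2_zero_p]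
      · obtain ⟨j', rfl⟩ := Nat.exists_eq_add_of_le h
        simp [C2_zero_p, add_comm 1 j']
    · intro m
      rw [F2]
      rw [A2_zero_p]
      simp [B2_zero_p]
  | succ p ih =>
    obtain ⟨ihE, ihF⟩ := ih
    set q : ℝ := (((p+1:ℕ):ℝ)^2)⁻¹ with hq
    set c : ℝ := ((p+1:ℕ):ℝ)⁻¹ with hc
    have hE' : ∀ m, E2 (p+1) p m = q ^ m := by
      intro m
      induction m with
      | zero => simp [E2, D2_zero, C2_zero]
      | succ m ihm =>
        have hsplit : ∀ j ∈ Finset.range (m+1),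
            (-1:ℝ)^j * D2 (p+1) (m+1-j) * C2 p j
              = (-1:ℝ)^j * D2 p (m+1-j) * C2 p j + q * ((-1:ℝ)^j * D2 (p+1) (m-j) * C2 p j) := by
          intro j hj
          rw [Finset.mem_range] at hj
          have h1 : m + 1 - j = (m - j) + 1 := by omega
          rw [h1, D2_succ, ← hq]
          ring
        rw [E2, Finset.sum_range_succ, Finset.sum_congr rfl hsplit, Finset.sum_add_distrib,
          ← Finset.mul_sum]
        have hEpp : E2 p p (m+1) = 0 := ihE (m+1) (by omega)
        rw [E2, Finset.sum_range_succ] at hEpp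
        rw [E2] at ihm
        rw [ihm]
        simp only [Nat.sub_self, D2_zero, C2_zero] at hEpp ⊢
        have : ∑ j ∈ Finset.range (m+1), (-1:ℝ)^j * D2 p (m+1-j) * C2 p j
            = -((-1:ℝ)^(m+1) * 1 * C2 p (m+1)) := by linarith
        rw [this]
        ring
    have hF' : ∀ n, A2 (p+1) n - ∑ k ∈ Finset.range (n+1), (-1:ℝ)^k * B2 p k * D2 (p+1) (n-k)
        = c * q ^ n := by
      intro n
      induction n with
      | zero =>
        simp only [zero_add, Finset.range_one, Finset.sum_singleton, pow_zero, Nat.sub_self,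
          D2_zero, A2_zero_succ, mul_one, one_mul]
        rw [B2_eq_A2_zero, ← hc]
        ring
      | succ n ihn =>
        have hsplit : ∀ k ∈ Finset.range (n+1),
            (-1:ℝ)^k * B2 p k * D2 (p+1) (n+1-k)
              = (-1:ℝ)^k * B2 p k * D2 p (n+1-k) + q * ((-1:ℝ)^k * B2 p k * D2 (p+1) (n-k)) := by
          intro k hk
          rw [Finset.mem_range] at hk
          have h1 : n + 1 - k = (n - k) + 1 := by omega
          rw [h1, D2_succ, ← hq]
          ring
        rw [Finset.sum_range_succ, Finset.sum_congr rfl hsplit, Finset.sum_add_distrib,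
          ← Finset.mul_sum, A2_succ, ← hq]
        have hFpp : F2 p p (n+1) = 0 := ihF (n+1)
        rw [F2, Finset.sum_range_succ] at hFpp
        simp only [Nat.sub_self, D2_zero] at hFpp ⊢
        have h2 : ∑ k ∈ Finset.range (n+1), (-1:ℝ)^k * B2 p k * D2 p (n+1-k)
            = A2 p (n+1) - (-1:ℝ)^(n+1) * B2 p (n+1) * 1 := by linarith
        rw [h2]
        have h3 : ∑ k ∈ Finset.range (n+1), (-1:ℝ)^k * B2 p k * D2 (p+1) (n-k)
            = A2 (p+1) n - c * q ^ n := by linarith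
        rw [h3]
        ring
    constructor
    · intro m hm
      obtain ⟨m', rfl⟩ := Nat.exists_eq_add_of_le hm
      rw [show 1 + m' = m' + 1 from Nat.add_comm 1 m']
      have hCsplit : ∀ j ∈ Finset.range (m'+1+1),
          (-1:ℝ)^j * D2 (p+1) (m'+1-j) * C2 (p+1) j
            = (-1:ℝ)^j * D2 (p+1) (m'+1-j) * C2 p j
              + q * (if j = 0 then 0 else (-1:ℝ)^j * D2 (p+1) (m'+1-j) * C2 p (j-1)) := by
        intro j hj
        rcases Nat.eq_zero_or_pos j with h | h
        · subst h; simp [C2_zero]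
        · obtain ⟨j', rfl⟩ := Nat.exists_eq_add_of_le h
          rw [if_neg (by omega), add_comm 1 j', C2_succ, ← hq]
          simp only [Nat.add_sub_cancel]
          ring
      rw [E2, Finset.sum_congr rfl hCsplit, Finset.sum_add_distrib, ← Finset.mul_sum]
      have h1 := hE' (m'+1)
      rw [E2] at h1
      rw [h1]
      have h2 : ∑ j ∈ Finset.range (m'+1+1),
          (if j = 0 then (0:ℝ) else (-1:ℝ)^j * D2 (p+1) (m'+1-j) * C2 p (j-1))
          = - q ^ m' := by
        rw [Finset.sum_range_succ']
        have h3 : ∀ j ∈ Finset.range (m'+1),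
            (if j + 1 = 0 then (0:ℝ) else (-1:ℝ)^(j+1) * D2 (p+1) (m'+1-(j+1)) * C2 p (j+1-1))
              = -((-1:ℝ)^j * D2 (p+1) (m'-j) * C2 p j) := by
          intro j hj
          rw [if_neg (by omega)]
          simp only [Nat.add_sub_cancel, Nat.succ_sub_succ, Nat.sub_zero]
          ring
        rw [Finset.sum_congr rfl h3, if_pos rfl, Finset.sum_neg_distrib]
        have h4 := hE' m'
        rw [E2] at h4
        rw [h4]
        ring
      rw [h2]
      ring
    · intro m
      rw [F2]
      have hB : ∀ k ∈ Finset.range (m+1), (-1:ℝ)^k * B2 (p+1) k * D2 (p+1) (m-k)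
          = (-1:ℝ)^k * B2 p k * D2 (p+1) (m-k)
            + c * ((-1:ℝ)^k * D2 (p+1) (m-k) * C2 p k) := by
        intro k _
        rw [B2_succ, ← hc]
        ring
      rw [Finset.sum_congr rfl hB, Finset.sum_add_distrib, ← Finset.mul_sum]
      have h1 := hF' m
      have h2 := hE' m
      rw [E2] at h2
      rw [h2]
      linarith [h1]

lemma zetaT_rep (m p : ℕ) : zetaT p (List.replicate m 2) = C2 p m := by
  induction m generalizing p with
  | zero => simp [zetaT_nil, C2_zero]
  | succ m ih =>
    rw [List.replicate_succ, zetaT_cons, C2]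
    exact Finset.sum_congr rfl fun n _ => by rw [ih]

lemma zetaStarT_rep (m p : ℕ) : zetaStarT p (List.replicate m 2) = D2 p m := by
  induction m generalizing p with
  | zero => simp [zetaStarT_nil, D2_zero]
  | succ m ih =>
    rw [List.replicate_succ, zetaStarT_cons, D2]
    exact Finset.sum_congr rfl fun n _ => by rw [ih]

lemma zetaStarT_rep_one (m p : ℕ) : zetaStarT p (List.replicate m 2 ++ [1]) = A2 p m := by
  induction m generalizing p with
  | zero =>
    rw [List.replicate_zero, List.nil_append, zetaStarT_cons, A2]
    exact Finset.sum_congr rfl fun n _ => by rw [zetaStarT_nil, pow_one, mul_one]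
  | succ m ih =>
    rw [List.replicate_succ, List.cons_append, zetaStarT_cons, A2]
    exact Finset.sum_congr rfl fun n _ => by rw [ih]

lemma zetaT_one_rep (k p : ℕ) : zetaT p (1 :: List.replicate k 2) = B2 p k := by
  rw [zetaT_cons, B2]
  exact Finset.sum_congr rfl fun n _ => by rw [zetaT_rep, pow_one]

theorem stmt_10 (p m : ℕ) :
    zetaStarT p (List.replicate m 2 ++ [1]) =
      ∑ k ∈ Finset.range (m + 1),
        (-1 : ℝ) ^ k * zetaT p (1 :: List.replicate k 2) *
          zetaStarT p (List.replicate (m - k) 2) := by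
  have hF := (master p).2 m
  rw [F2, sub_eq_zero] at hF
  rw [zetaStarT_rep_one, hF]
  exact Finset.sum_congr rfl fun k _ => by rw [zetaT_one_rep, zetaStarT_rep]
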